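/- Let (H₁,V₁) be a matrix solution of the Jacobi system H' = AH + BV, V' = −CH − A*V (B, C symmetric) with det H₁(s) ≠ 0 for all s ∈ [t₀,t] and image(H₁,V₁) Lagrangian. Then every other matrix solution (H₂,V₂) has the form H₂(t) = H₁(t)[D + ∫_{t₀}^t H₁^{-1} B (H₁*)^{-1} K ds] and V₂ = (H₁*)^{-1}[K + V₁* H₂], where K and D are constant matrices; moreover image(H₂,V₂) is Lagrangian if and only if K*D is symmetric. -/

import Mathlib

open Matrix

attribute [local instance] Matrix.linftyOpNormedRing Matrix.linftyOpNormedAlgebra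

section aux
variable {n : ℕ}

/-- entry extraction as a continuous linear map -/
noncomputable def entryCLM (i j : Fin n) : Matrix (Fin n) (Fin n) ℝ →L[ℝ] ℝ :=
  LinearMap.toContinuousLinearMap
    { toFun := fun A => A i j
      map_add' := fun _ _ => rfl
      map_smul' := fun _ _ => rfl }

lemma hasDerivAt_matrix {H : ℝ → Matrix (Fin n) (Fin n) ℝ}
    {H' : Matrix (Fin n) (Fin n) ℝ} {t : ℝ} :
    HasDerivAt H H' t ↔ ∀ i j, HasDerivAt (fun s => H s i j) (H' i j) t := by
  constructor
  · intro h i j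
    have := ((entryCLM i j).hasFDerivAt.comp_hasDerivAt t h)
    exact this
  · intro h
    have h1 : H = fun s => ∑ i : Fin n, ∑ j : Fin n, Matrix.single i j (H s i j) := by
      funext s; exact (matrix_eq_sum_single (H s))
    have h2 : H' = ∑ i : Fin n, ∑ j : Fin n, Matrix.single i j (H' i j) :=
      matrix_eq_sum_single H'
    rw [h1, h2]
    exact HasDerivAt.fun_sum fun i _ => HasDerivAt.fun_sum fun j _ => by
      simpa [Matrix.smul_single, smul_eq_mul, mul_one] using
        (h i j).smul_const (Matrix.single i j (1:ℝ))

lemma hasDerivAt_inv_matrix {H : ℝ → Matrix (Fin n) (Fin n) ℝ}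
    {H' : Matrix (Fin n) (Fin n) ℝ} {t : ℝ}
    (hd : HasDerivAt H H' t) (hu : IsUnit (H t)) :
    HasDerivAt (fun s => (H s)⁻¹) (-((H t)⁻¹ * H' * (H t)⁻¹)) t := by
  obtain ⟨u, hu⟩ := hu
  have h1 : (fun s => (H s)⁻¹) = fun s => Ring.inverse (H s) := by
    funext s; rw [Matrix.nonsing_inv_eq_ringInverse]
  have h2 : HasFDerivAt Ring.inverse
      (-(ContinuousLinearMap.mulLeftRight ℝ _ ↑u⁻¹ ↑u⁻¹)) (H t) := by
    rw [← hu]; exact hasFDerivAt_ringInverse u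
  have h3 := h2.comp_hasDerivAt t hd
  rw [h1]
  refine h3.congr_deriv (Eq.symm ?_)
  simp [Matrix.coe_units_inv, hu, mul_assoc]

lemma continuousOn_matrix {H : ℝ → Matrix (Fin n) (Fin n) ℝ} {s : Set ℝ}
    (h : ∀ i j, ContinuousOn (fun t => H t i j) s) : ContinuousOn H s := by
  have h1 : H = fun t => ∑ i : Fin n, ∑ j : Fin n, Matrix.single i j (H t i j) := by
    funext t; exact (matrix_eq_sum_single (H t))
  rw [h1]
  apply continuousOn_finset_sum; intro i _
  apply continuousOn_finset_sum; intro j _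
  have := ((h i j).smul (continuousOn_const (c := Matrix.single i j (1:ℝ))))
  exact this.congr fun x _ => by simp [Matrix.smul_single]

lemma dot_aux (P Q : Matrix (Fin n) (Fin n) ℝ) (x y : Fin n → ℝ) :
    (P *ᵥ x) ⬝ᵥ (Q *ᵥ y) = (x ᵥ* (Pᵀ * Q)) ⬝ᵥ y := by
  rw [← Matrix.vecMul_transpose, Matrix.dotProduct_mulVec, Matrix.vecMul_vecMul]

lemma dot_aux2 (S : Matrix (Fin n) (Fin n) ℝ) (x y : Fin n → ℝ) :
    (x ᵥ* Sᵀ) ⬝ᵥ y = (y ᵥ* S) ⬝ᵥ x := by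
  rw [← Matrix.mulVec_transpose, dotProduct_comm, Matrix.dotProduct_mulVec, Matrix.transpose_transpose]

lemma single_aux (S : Matrix (Fin n) (Fin n) ℝ) (i j : Fin n) :
    (Pi.single i (1:ℝ) ᵥ* S) ⬝ᵥ Pi.single j (1:ℝ) = S i j := by
  simp [Matrix.vecMul, dotProduct_single, single_dotProduct]

end aux


/-- Lemma (general solution of the Jacobi equation):  if `(H₁,V₁)` is a matrix
solution of `H' = A H + B V`, `V' = -C H - Aᵀ V` with `det H₁ ≠ 0` on `[t₀,t₁]`
and Lagrangian image (`V₁ᵀ H₁` symmetric), then any other matrix solution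
`(H₂,V₂)` is of the form
`H₂ = H₁ (D + ∫_{t₀}^t H₁⁻¹ B (H₁ᵀ)⁻¹ K ds)`, `V₂ = (H₁ᵀ)⁻¹ (K + V₁ᵀ H₂)`
for constant matrices `K`, `D`; moreover the image of `(H₂,V₂)` is Lagrangian
iff `Kᵀ D` is symmetric. -/
theorem jacobi_general_solution
    (n : ℕ) (A B C : ℝ → Matrix (Fin n) (Fin n) ℝ)
    (hBcont : ∀ i j, Continuous fun t => B t i j)
    (hBsymm : ∀ t, (B t)ᵀ = B t) (hCsymm : ∀ t, (C t)ᵀ = C t)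
    (H₁ V₁ H₂ V₂ : ℝ → Matrix (Fin n) (Fin n) ℝ)
    (hH₁ : ∀ t, ∀ i j, HasDerivAt (fun s => H₁ s i j)
      ((A t * H₁ t + B t * V₁ t) i j) t)
    (hV₁ : ∀ t, ∀ i j, HasDerivAt (fun s => V₁ s i j)
      ((-(C t * H₁ t) - (A t)ᵀ * V₁ t) i j) t)
    (hH₂ : ∀ t, ∀ i j, HasDerivAt (fun s => H₂ s i j)
      ((A t * H₂ t + B t * V₂ t) i j) t)
    (hV₂ : ∀ t, ∀ i j, HasDerivAt (fun s => V₂ s i j)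
      ((-(C t * H₂ t) - (A t)ᵀ * V₂ t) i j) t)
    (t₀ t₁ : ℝ) (ht : t₀ < t₁)
    (hdet : ∀ s ∈ Set.Icc t₀ t₁, (H₁ s).det ≠ 0)
    (hLag₁ : ∀ s ∈ Set.Icc t₀ t₁, ((V₁ s)ᵀ * H₁ s)ᵀ = (V₁ s)ᵀ * H₁ s) :
    ∃ K D : Matrix (Fin n) (Fin n) ℝ,
      (∀ t ∈ Set.Icc t₀ t₁,
        H₂ t = H₁ t *
          (D + Matrix.of fun i j =>
            ∫ s in t₀..t, ((H₁ s)⁻¹ * B s * ((H₁ s)ᵀ)⁻¹ * K) i j) ∧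
        V₂ t = ((H₁ t)ᵀ)⁻¹ * (K + (V₁ t)ᵀ * H₂ t)) ∧
      ((∀ t ∈ Set.Icc t₀ t₁, ∀ x y : Fin n → ℝ,
          (V₂ t *ᵥ x) ⬝ᵥ (H₂ t *ᵥ y) - (V₂ t *ᵥ y) ⬝ᵥ (H₂ t *ᵥ x) = 0)
        ↔ (Kᵀ * D)ᵀ = Kᵀ * D) := by
  classical
  -- matrix-level derivatives
  have hH₁' : ∀ t, HasDerivAt H₁ (A t * H₁ t + B t * V₁ t) t :=
    fun t => hasDerivAt_matrix.2 (hH₁ t)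
  have hH₂' : ∀ t, HasDerivAt H₂ (A t * H₂ t + B t * V₂ t) t :=
    fun t => hasDerivAt_matrix.2 (hH₂ t)
  have hV₂' : ∀ t, HasDerivAt V₂ (-(C t * H₂ t) - (A t)ᵀ * V₂ t) t :=
    fun t => hasDerivAt_matrix.2 (hV₂ t)
  have hH₁T : ∀ t, HasDerivAt (fun s => (H₁ s)ᵀ) ((A t * H₁ t + B t * V₁ t)ᵀ) t :=
    fun t => hasDerivAt_matrix.2 (fun i j => hH₁ t j i)
  have hV₁T : ∀ t, HasDerivAt (fun s => (V₁ s)ᵀ) ((-(C t * H₁ t) - (A t)ᵀ * V₁ t)ᵀ) t :=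
    fun t => hasDerivAt_matrix.2 (fun i j => hV₁ t j i)
  set K := (H₁ t₀)ᵀ * V₂ t₀ - (V₁ t₀)ᵀ * H₂ t₀ with hKdef
  set D := (H₁ t₀)⁻¹ * H₂ t₀ with hDdef
  -- K is constant
  have hF : ∀ t, HasDerivAt (fun s => (H₁ s)ᵀ * V₂ s - (V₁ s)ᵀ * H₂ s) 0 t := by
    intro t
    have h := ((hH₁T t).mul (hV₂' t)).sub ((hV₁T t).mul (hH₂' t))
    refine h.congr_deriv (Eq.symm ?_)
    have hb := hBsymm t; have hc := hCsymm t
    simp only [Matrix.transpose_add, Matrix.transpose_mul, Matrix.transpose_sub,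
      Matrix.transpose_neg, Matrix.transpose_transpose, hb, hc]
    noncomm_ring
  have hKconst : ∀ t, (H₁ t)ᵀ * V₂ t - (V₁ t)ᵀ * H₂ t = K := by
    intro t
    have key : ∀ i j, ((H₁ t)ᵀ * V₂ t - (V₁ t)ᵀ * H₂ t) i j = K i j := by
      intro i j
      have hd : ∀ s : ℝ, HasDerivAt (fun r => ((H₁ r)ᵀ * V₂ r - (V₁ r)ᵀ * H₂ r) i j) 0 s :=
        fun s => by simpa using (hasDerivAt_matrix.1 (hF s) i j)
      exact is_const_of_deriv_eq_zero (fun s => (hd s).differentiableAt)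
        (fun s => (hd s).deriv) t t₀
    ext i j; exact key i j
  have hdetu : ∀ s ∈ Set.Icc t₀ t₁, IsUnit (H₁ s).det :=
    fun s hs => isUnit_iff_ne_zero.2 (hdet s hs)
  have hunit : ∀ s ∈ Set.Icc t₀ t₁, IsUnit (H₁ s) :=
    fun s hs => (Matrix.isUnit_iff_isUnit_det _).2 (hdetu s hs)
  have hdetuT : ∀ s ∈ Set.Icc t₀ t₁, IsUnit ((H₁ s)ᵀ).det :=
    fun s hs => by rw [Matrix.det_transpose]; exact hdetu s hs
  -- V₂ formula
  have hV₂eq : ∀ s ∈ Set.Icc t₀ t₁, V₂ s = ((H₁ s)ᵀ)⁻¹ * (K + (V₁ s)ᵀ * H₂ s) := by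
    intro s hs
    have h1 : K + (V₁ s)ᵀ * H₂ s = (H₁ s)ᵀ * V₂ s := by
      rw [← hKconst s]; abel
    rw [h1, Matrix.nonsing_inv_mul_cancel_left _ _ (hdetuT s hs)]
  -- symmetry consequence
  have hsymm : ∀ s ∈ Set.Icc t₀ t₁, V₁ s * (H₁ s)⁻¹ = ((H₁ s)ᵀ)⁻¹ * (V₁ s)ᵀ := by
    intro s hs
    have h1 : (H₁ s)ᵀ * V₁ s = (V₁ s)ᵀ * H₁ s := by
      have := hLag₁ s hs; rwa [Matrix.transpose_mul, Matrix.transpose_transpose] at this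
    have h2 : (H₁ s)ᵀ * (V₁ s * (H₁ s)⁻¹) = (H₁ s)ᵀ * (((H₁ s)ᵀ)⁻¹ * (V₁ s)ᵀ) := by
      rw [Matrix.mul_nonsing_inv_cancel_left _ _ (hdetuT s hs), ← Matrix.mul_assoc, h1,
        Matrix.mul_assoc, Matrix.mul_nonsing_inv _ (hdetu s hs), Matrix.mul_one]
    have h3 := congrArg (fun X => (((H₁ s)ᵀ)⁻¹) * X) h2
    simpa [Matrix.nonsing_inv_mul_cancel_left _ _ (hdetuT s hs)] using h3
  -- derivative of Y = H₁⁻¹ H₂ on the interval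
  have hYd : ∀ x ∈ Set.Icc t₀ t₁, HasDerivAt (fun s => (H₁ s)⁻¹ * H₂ s)
      ((H₁ x)⁻¹ * B x * ((H₁ x)ᵀ)⁻¹ * K) x := by
    intro x hx
    have h := (hasDerivAt_inv_matrix (hH₁' x) (hunit x hx)).mul (hH₂' x)
    refine h.congr_deriv (Eq.symm ?_)
    have e1 : H₁ x * (H₁ x)⁻¹ = 1 := Matrix.mul_nonsing_inv _ (hdetu x hx)
    have key : V₂ x - V₁ x * (H₁ x)⁻¹ * H₂ x = ((H₁ x)ᵀ)⁻¹ * K := by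
      rw [hsymm x hx, hV₂eq x hx]; noncomm_ring
    have expand : -((H₁ x)⁻¹ * (A x * H₁ x + B x * V₁ x) * (H₁ x)⁻¹) * H₂ x
        + (H₁ x)⁻¹ * (A x * H₂ x + B x * V₂ x)
        = (H₁ x)⁻¹ * A x * (H₂ x - (H₁ x * (H₁ x)⁻¹) * H₂ x)
          + (H₁ x)⁻¹ * B x * (V₂ x - V₁ x * (H₁ x)⁻¹ * H₂ x) := by
      noncomm_ring
    rw [expand, e1, Matrix.one_mul, sub_self, Matrix.mul_zero, zero_add, key,
      Matrix.mul_assoc]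
  -- continuity of the integrand
  have hInvCont : ContinuousOn (fun s => (H₁ s)⁻¹) (Set.Icc t₀ t₁) := fun x hx =>
    ((hasDerivAt_inv_matrix (hH₁' x) (hunit x hx)).continuousAt).continuousWithinAt
  have hBmat : Continuous B := by
    exact continuousOn_univ.1
      (continuousOn_matrix (fun i j => (hBcont i j).continuousOn))
  have hInvEnt : ∀ i j, ContinuousOn (fun s => (H₁ s)⁻¹ i j) (Set.Icc t₀ t₁) :=
    fun i j => ((entryCLM i j).continuous.comp_continuousOn hInvCont)
  have hInvTCont : ContinuousOn (fun s => ((H₁ s)ᵀ)⁻¹) (Set.Icc t₀ t₁) := by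
    have h0 : (fun s => ((H₁ s)ᵀ)⁻¹) = fun s => ((H₁ s)⁻¹)ᵀ := by
      funext s; rw [Matrix.transpose_nonsing_inv]
    rw [h0]
    exact continuousOn_matrix (fun i j => hInvEnt j i)
  have hfCont : ContinuousOn (fun s => (H₁ s)⁻¹ * B s * ((H₁ s)ᵀ)⁻¹ * K)
      (Set.Icc t₀ t₁) :=
    ((hInvCont.mul hBmat.continuousOn).mul hInvTCont).mul continuousOn_const
  have hfEnt : ∀ i j, ContinuousOn
      (fun s => ((H₁ s)⁻¹ * B s * ((H₁ s)ᵀ)⁻¹ * K) i j) (Set.Icc t₀ t₁) :=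
    fun i j => (entryCLM i j).continuous.comp_continuousOn hfCont
  have hIcc : ∀ t ∈ Set.Icc t₀ t₁, Set.uIcc t₀ t ⊆ Set.Icc t₀ t₁ := by
    intro t htm
    rw [Set.uIcc_of_le htm.1]
    exact Set.Icc_subset_Icc le_rfl htm.2
  -- fundamental theorem of calculus
  have hFTC : ∀ t ∈ Set.Icc t₀ t₁, ∀ i j,
      ∫ s in t₀..t, ((H₁ s)⁻¹ * B s * ((H₁ s)ᵀ)⁻¹ * K) i j
        = ((H₁ t)⁻¹ * H₂ t) i j - D i j := by
    intro t htm i j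
    have h := intervalIntegral.integral_eq_sub_of_hasDerivAt
      (f := fun s => ((H₁ s)⁻¹ * H₂ s) i j)
      (f' := fun s => ((H₁ s)⁻¹ * B s * ((H₁ s)ᵀ)⁻¹ * K) i j)
      (fun x hx => hasDerivAt_matrix.1 (hYd x (hIcc t htm hx)) i j)
      (((hfEnt i j).mono (hIcc t htm)).intervalIntegrable)
    rw [h, hDdef]
  -- part 1 : the H₂ formula
  have hH₂eq : ∀ t ∈ Set.Icc t₀ t₁,
      H₂ t = H₁ t * (D + Matrix.of fun i j =>
        ∫ s in t₀..t, ((H₁ s)⁻¹ * B s * ((H₁ s)ᵀ)⁻¹ * K) i j) := by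
    intro t htm
    have hY : (H₁ t)⁻¹ * H₂ t = D + Matrix.of (fun i j =>
        ∫ s in t₀..t, ((H₁ s)⁻¹ * B s * ((H₁ s)ᵀ)⁻¹ * K) i j) := by
      ext i j
      simp only [Matrix.add_apply, Matrix.of_apply, hFTC t htm i j]
      ring
    rw [← hY, Matrix.mul_nonsing_inv_cancel_left _ _ (hdetu t htm)]
  -- symmetry of Kᵀ times the integrand
  have hgsym : ∀ s, (Kᵀ * ((H₁ s)⁻¹ * B s * ((H₁ s)ᵀ)⁻¹ * K))ᵀ
      = Kᵀ * ((H₁ s)⁻¹ * B s * ((H₁ s)ᵀ)⁻¹ * K) := by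
    intro s
    have e2 : (((H₁ s)ᵀ)⁻¹)ᵀ = (H₁ s)⁻¹ := by
      rw [← Matrix.transpose_nonsing_inv, Matrix.transpose_transpose]
    simp only [Matrix.transpose_mul, Matrix.transpose_transpose, e2, hBsymm,
      Matrix.transpose_nonsing_inv]
    noncomm_ring
  -- Kᵀ M t is symmetric
  have hKM : ∀ t ∈ Set.Icc t₀ t₁,
      (Kᵀ * Matrix.of (fun i j =>
        ∫ s in t₀..t, ((H₁ s)⁻¹ * B s * ((H₁ s)ᵀ)⁻¹ * K) i j))ᵀ
      = Kᵀ * Matrix.of (fun i j =>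
        ∫ s in t₀..t, ((H₁ s)⁻¹ * B s * ((H₁ s)ᵀ)⁻¹ * K) i j) := by
    intro t htm
    have hint : ∀ i j, (Kᵀ * Matrix.of (fun i j =>
        ∫ s in t₀..t, ((H₁ s)⁻¹ * B s * ((H₁ s)ᵀ)⁻¹ * K) i j)) i j
        = ∫ s in t₀..t, (Kᵀ * ((H₁ s)⁻¹ * B s * ((H₁ s)ᵀ)⁻¹ * K)) i j := by
      intro i j
      rw [Matrix.mul_apply]
      have h1 : ∀ k : Fin n, Kᵀ i k * ∫ s in t₀..t,
          ((H₁ s)⁻¹ * B s * ((H₁ s)ᵀ)⁻¹ * K) k j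
          = ∫ s in t₀..t, Kᵀ i k * ((H₁ s)⁻¹ * B s * ((H₁ s)ᵀ)⁻¹ * K) k j :=
        fun k => (intervalIntegral.integral_const_mul _ _).symm
      simp only [Matrix.of_apply, h1]
      rw [← intervalIntegral.integral_finset_sum]
      · exact intervalIntegral.integral_congr (fun s _ => (Matrix.mul_apply).symm)
      · intro k _
        exact (((hfEnt k j).mono (hIcc t htm)).intervalIntegrable).const_mul _
    ext i j
    rw [Matrix.transpose_apply, hint i j, hint j i]
    refine intervalIntegral.integral_congr fun s _ => ?_
    have h2 := congrFun (congrFun (hgsym s) j) i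
    simp only [Matrix.transpose_apply] at h2
    simpa using h2.symm
  -- the Lagrangian identity
  have hLagEq : ∀ t ∈ Set.Icc t₀ t₁,
      (V₂ t)ᵀ * H₂ t - (H₂ t)ᵀ * V₂ t = Kᵀ * D - Dᵀ * K := by
    intro t htm
    set M := Matrix.of (fun i j =>
      ∫ s in t₀..t, ((H₁ s)⁻¹ * B s * ((H₁ s)ᵀ)⁻¹ * K) i j) with hM
    have e2 : (((H₁ t)ᵀ)⁻¹)ᵀ = (H₁ t)⁻¹ := by
      rw [← Matrix.transpose_nonsing_inv, Matrix.transpose_transpose]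
    have c1 : (H₁ t)⁻¹ * H₂ t = D + M := by
      ext i j
      simp only [Matrix.add_apply, Matrix.of_apply, hM, hFTC t htm i j]
      ring
    have c2 : (H₂ t)ᵀ * ((H₁ t)ᵀ)⁻¹ = (D + M)ᵀ := by
      rw [← c1, Matrix.transpose_mul, Matrix.transpose_nonsing_inv]
    have hMK : Mᵀ * K = Kᵀ * M := by
      rw [← hKM t htm, Matrix.transpose_mul, Matrix.transpose_transpose]
    calc (V₂ t)ᵀ * H₂ t - (H₂ t)ᵀ * V₂ t
        = (((H₁ t)ᵀ)⁻¹ * (K + (V₁ t)ᵀ * H₂ t))ᵀ * H₂ t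
          - (H₂ t)ᵀ * (((H₁ t)ᵀ)⁻¹ * (K + (V₁ t)ᵀ * H₂ t)) := by
          rw [← hV₂eq t htm]
      _ = Kᵀ * ((H₁ t)⁻¹ * H₂ t) + ((H₂ t)ᵀ * (V₁ t * (H₁ t)⁻¹)) * H₂ t
          - ((H₂ t)ᵀ * ((H₁ t)ᵀ)⁻¹) * K
          - (((H₂ t)ᵀ * ((H₁ t)ᵀ)⁻¹) * (V₁ t)ᵀ) * H₂ t := by
          simp only [Matrix.transpose_mul, Matrix.transpose_add,
            Matrix.transpose_transpose, e2]
          noncomm_ring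
      _ = Kᵀ * (D + M) + ((H₂ t)ᵀ * (((H₁ t)ᵀ)⁻¹ * (V₁ t)ᵀ)) * H₂ t
          - (D + M)ᵀ * K - ((D + M)ᵀ * (V₁ t)ᵀ) * H₂ t := by
          rw [c1, c2, hsymm t htm]
      _ = Kᵀ * (D + M) - (D + M)ᵀ * K := by
          rw [← Matrix.mul_assoc ((H₂ t)ᵀ), c2]; abel
      _ = Kᵀ * D - Dᵀ * K := by
          simp only [Matrix.mul_add, Matrix.transpose_add, Matrix.add_mul, hMK]
          abel
  -- conclusion
  refine ⟨K, D, fun t htm => ⟨hH₂eq t htm, hV₂eq t htm⟩, ?_⟩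
  constructor
  · intro h
    have h0 := h t₀ (Set.left_mem_Icc.2 ht.le)
    have hmat : (V₂ t₀)ᵀ * H₂ t₀ - (H₂ t₀)ᵀ * V₂ t₀ = 0 := by
      ext i j
      have e := h0 (Pi.single i 1) (Pi.single j 1)
      rw [dot_aux, dot_aux, single_aux, single_aux] at e
      have h3 : (H₂ t₀)ᵀ * V₂ t₀ = ((V₂ t₀)ᵀ * H₂ t₀)ᵀ := by
        rw [Matrix.transpose_mul, Matrix.transpose_transpose]
      simp only [Matrix.sub_apply, Matrix.zero_apply, h3, Matrix.transpose_apply]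
      exact e
    have h4 : Kᵀ * D - Dᵀ * K = 0 := by
      rw [← hLagEq t₀ (Set.left_mem_Icc.2 ht.le)]; exact hmat
    have h5 : Dᵀ * K = Kᵀ * D := (sub_eq_zero.mp h4).symm
    rw [Matrix.transpose_mul, Matrix.transpose_transpose]
    exact h5
  · intro h t htm x y
    have h5 : Kᵀ * D - Dᵀ * K = 0 := by
      have hTT : (Kᵀ * D)ᵀ = Dᵀ * K := by
        rw [Matrix.transpose_mul, Matrix.transpose_transpose]
      have h6 : Dᵀ * K = Kᵀ * D := hTT.symm.trans h
      rw [h6, sub_self]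
    have hmat : (V₂ t)ᵀ * H₂ t - (H₂ t)ᵀ * V₂ t = 0 := by
      rw [hLagEq t htm, h5]
    have e6 : (V₂ t *ᵥ y) ⬝ᵥ (H₂ t *ᵥ x) = (x ᵥ* ((H₂ t)ᵀ * V₂ t)) ⬝ᵥ y := by
      rw [dot_aux]
      rw [← dot_aux2 ((V₂ t)ᵀ * H₂ t), Matrix.transpose_mul, Matrix.transpose_transpose]
    rw [dot_aux, e6, ← sub_dotProduct, ← Matrix.vecMul_sub, hmat, Matrix.vecMul_zero,
      zero_dotProduct]
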